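/- For the R×R matrix M with M_{pq} = sign(p - q), if R is even then M is invertible (kernel is trivial). -/

import Mathlib

lemma sign_diff_aux (a b : ℤ) :
    Int.sign (a + 1 - b) - Int.sign (a - b)
      = (if b = a then 1 else 0) + (if b = a + 1 then 1 else 0) := by
  rcases lt_trichotomy b a with h | h | h
  · rw [Int.sign_eq_one_of_pos (by omega), Int.sign_eq_one_of_pos (by omega),
      if_neg (by omega), if_neg (by omega)]
    norm_num
  · subst h
    rw [Int.sign_eq_one_of_pos (by omega)]
    simp
  · by_cases hb : b = a + 1
    · subst hb
      rw [show a + 1 - (a + 1) = 0 by ring, Int.sign_zero,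
        Int.sign_eq_neg_one_of_neg (by omega), if_neg (by omega), if_pos rfl]
      norm_num
    · rw [Int.sign_eq_neg_one_of_neg (by omega), Int.sign_eq_neg_one_of_neg (by omega),
        if_neg (by omega), if_neg hb]
      norm_num

theorem sign_matrix_even_invertible (R : ℕ) (hR : 0 < R) (hEven : Even R)
    (M : Matrix (Fin R) (Fin R) ℝ)
    (hM : ∀ p q : Fin R, M p q = Int.sign ((p : ℤ) - (q : ℤ))) :
    ∀ Q : Fin R → ℝ, M.mulVec Q = 0 → Q = 0 := by
  intro Q hQ
  have key : ∀ p : Fin R, ∑ q, M p q * Q q = 0 := by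
    intro p
    have := congrFun hQ p
    simpa [Matrix.mulVec, dotProduct] using this
  set p0 : Fin R := ⟨0, hR⟩ with hp0
  -- consecutive rows: Q (i+1) = - Q i
  have step : ∀ i : ℕ, ∀ hi : i + 1 < R,
      Q ⟨i + 1, hi⟩ = - Q ⟨i, Nat.lt_of_succ_lt hi⟩ := by
    intro i hi
    set p : Fin R := ⟨i, Nat.lt_of_succ_lt hi⟩
    set p' : Fin R := ⟨i + 1, hi⟩
    have h0 : ∑ q, (M p' q - M p q) * Q q = 0 := by
      rw [Finset.sum_congr rfl (fun q _ => sub_mul (M p' q) (M p q) (Q q)),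
        Finset.sum_sub_distrib, key, key, sub_zero]
    have h1 : ∀ q : Fin R, (M p' q - M p q) * Q q
        = (if q = p then Q q else 0) + (if q = p' then Q q else 0) := by
      intro q
      rw [hM, hM]
      have hp' : ((p' : ℤ)) = (p : ℤ) + 1 := by simp [p, p']
      rw [hp']
      have := sign_diff_aux (p : ℤ) (q : ℤ)
      have hcast : ((Int.sign ((p:ℤ) + 1 - q) : ℝ)) - ((Int.sign ((p:ℤ) - q) : ℝ))
          = ((if (q:ℤ) = (p:ℤ) then 1 else 0) + (if (q:ℤ) = (p:ℤ) + 1 then 1 else 0) : ℝ) := by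
        have := congrArg (fun z : ℤ => (z : ℝ)) this
        push_cast at this
        convert this using 2 <;> simp
      have e1 : ((q:ℤ) = (p:ℤ)) ↔ q = p := by
        constructor
        · intro h; exact Fin.ext (by exact_mod_cast h)
        · intro h; rw [h]
      have e2 : ((q:ℤ) = (p:ℤ) + 1) ↔ q = p' := by
        constructor
        · intro h; apply Fin.ext; have : (q : ℕ) = i + 1 := by
            have : (q : ℤ) = (i : ℤ) + 1 := by simpa [p] using h
            exact_mod_cast this
          simpa [p'] using this
        · intro h; rw [h, hp']
      rw [hcast]
      simp only [e1, e2]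
      have hpp' : p ≠ p' := by
        intro h
        have := congrArg Fin.val h
        simp [p, p'] at this
      by_cases hq1 : q = p <;> by_cases hq2 : q = p' <;>
        simp [hq1, hq2, hpp', Ne.symm hpp'] <;> ring
    rw [Finset.sum_congr rfl (fun q _ => h1 q), Finset.sum_add_distrib,
      Finset.sum_ite_eq' _ p, Finset.sum_ite_eq' _ p'] at h0
    simp at h0
    linarith
  -- alternation
  have alt : ∀ i : ℕ, ∀ hi : i < R, Q ⟨i, hi⟩ = (-1) ^ i * Q p0 := by
    intro i
    induction i with
    | zero => intro hi; simp [hp0]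
    | succ n ih =>
      intro hi
      rw [step n hi, ih (Nat.lt_of_succ_lt hi)]
      ring
  -- row 0 equation
  have row0 := key p0
  have hM0 : ∀ q : Fin R, M p0 q * Q q = -((-1) ^ (q : ℕ) * Q p0) + (if q = p0 then Q p0 else 0) := by
    intro q
    rw [hM]
    have hq : Q q = (-1) ^ (q : ℕ) * Q p0 := by
      have := alt (q : ℕ) q.isLt
      simpa using this
    by_cases h : q = p0
    · subst h
      simp [hp0]
    · have hqpos : (0 : ℤ) < (q : ℤ) := by
        have : (q : ℕ) ≠ 0 := fun hc => h (Fin.ext (by simp [hc, hp0]))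
        omega
      rw [Int.sign_eq_neg_one_of_neg (by simp [hp0]; omega), if_neg h, hq]
      push_cast
      ring
  rw [Finset.sum_congr rfl (fun q _ => hM0 q), Finset.sum_add_distrib,
    Finset.sum_ite_eq' _ p0] at row0
  simp only [Finset.mem_univ, if_true] at row0
  have hS : ∑ q : Fin R, ((-1 : ℝ)) ^ (q : ℕ) = 0 := by
    rw [Fin.sum_univ_eq_sum_range (fun i => ((-1 : ℝ)) ^ i)]
    rw [geom_sum_eq (by norm_num)]
    rw [hEven.neg_one_pow]
    simp
  have hQ0 : Q p0 = 0 := by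
    have h2 : ∑ q : Fin R, -((-1 : ℝ) ^ (q : ℕ) * Q p0) = 0 := by
      rw [Finset.sum_neg_distrib, ← Finset.sum_mul, hS]
      ring
    rw [h2] at row0
    linarith
  funext i
  have := alt (i : ℕ) i.isLt
  simp [hQ0] at this
  simpa using this
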